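/- Let W be a finite type with a probability vector ρ : W → ℝ (ρ w ≥ 0, Σ_w ρ w = 1), let Ω be a finite type with decidable equality, let B ≥ 2, and let g : Fin B → W → Ω be a family of maps with g i₀ = g j₀ for some indices i₀ ≠ j₀. For a family h : Fin B → W → Ω, let H(h) denote the Shannon entropy of the pushforward of ρ under the map w ↦ (i ↦ h i w) : W → (Fin B → Ω). Then for any map g' : W → Ω, replacing the j₀-th coordinate of g by g' does not decrease the entropy: H(g) ≤ H(g with coordinate j₀ replaced by g'). -/

import Mathlib

/-- Shannon entropy of the pushforward of the vector `ρ` on `W` under `f : W → T`: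
the pushforward assigns to each `t` the total mass `∑_{w : f w = t} ρ w`. -/
noncomputable def pushEnt {W T : Type*} [Fintype W] [Fintype T] [DecidableEq T]
    (ρ : W → ℝ) (f : W → T) : ℝ :=
  ∑ t, (∑ w ∈ Finset.univ.filter fun w => f w = t, ρ w) *
    Real.log (1 / ∑ w ∈ Finset.univ.filter fun w => f w = t, ρ w)

lemma negMulLog_add_le {a b : ℝ} (ha : 0 ≤ a) (hb : 0 ≤ b) :
    Real.negMulLog (a + b) ≤ Real.negMulLog a + Real.negMulLog b := by
  rcases eq_or_lt_of_le ha with rfl | ha'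
  · simp
  rcases eq_or_lt_of_le hb with rfl | hb'
  · simp
  have h1 : Real.log a ≤ Real.log (a + b) := Real.log_le_log ha' (by linarith)
  have h2 : Real.log b ≤ Real.log (a + b) := Real.log_le_log hb' (by linarith)
  simp only [Real.negMulLog, neg_mul]
  nlinarith

lemma negMulLog_sum_le {S : Type*} (s : Finset S) (f : S → ℝ) (hf : ∀ x ∈ s, 0 ≤ f x) :
    Real.negMulLog (∑ x ∈ s, f x) ≤ ∑ x ∈ s, Real.negMulLog (f x) := by
  classical
  induction s using Finset.induction with
  | empty => simp
  | insert a t hx ih =>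
    rw [Finset.sum_insert hx, Finset.sum_insert hx]
    calc Real.negMulLog (f a + ∑ x ∈ t, f x)
        ≤ Real.negMulLog (f a) + Real.negMulLog (∑ x ∈ t, f x) :=
          negMulLog_add_le (hf a (Finset.mem_insert_self a t))
            (Finset.sum_nonneg fun x hxt => hf x (Finset.mem_insert_of_mem hxt))
      _ ≤ _ := by
          have := ih (fun x hxt => hf x (Finset.mem_insert_of_mem hxt))
          linarith

lemma pushEnt_eq_negMulLog {W T : Type*} [Fintype W] [Fintype T] [DecidableEq T]
    (ρ : W → ℝ) (f : W → T) :
    pushEnt ρ f = ∑ t, Real.negMulLog (∑ w ∈ Finset.univ.filter fun w => f w = t, ρ w) := by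
  unfold pushEnt
  refine Finset.sum_congr rfl fun t _ => ?_
  rw [one_div, Real.log_inv, Real.negMulLog]
  ring

/-- Data processing: composing with a map cannot increase the entropy. -/
lemma pushEnt_comp_le {W T S : Type*} [Fintype W] [Fintype T] [DecidableEq T]
    [Fintype S] [DecidableEq S]
    (ρ : W → ℝ) (hρ0 : ∀ w, 0 ≤ ρ w) (f : W → T) (φ : T → S) :
    pushEnt ρ (φ ∘ f) ≤ pushEnt ρ f := by
  rw [pushEnt_eq_negMulLog, pushEnt_eq_negMulLog]
  have key : ∀ s : S, (∑ w ∈ Finset.univ.filter fun w => (φ ∘ f) w = s, ρ w)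
      = ∑ t ∈ Finset.univ.filter fun t => φ t = s,
          ∑ w ∈ Finset.univ.filter fun w => f w = t, ρ w := by
    intro s
    rw [Finset.sum_fiberwise_eq_sum_filter]
    apply Finset.sum_congr
    · ext w; simp
    · intros; rfl
  calc ∑ s, Real.negMulLog (∑ w ∈ Finset.univ.filter fun w => (φ ∘ f) w = s, ρ w)
      ≤ ∑ s, ∑ t ∈ Finset.univ.filter fun t => φ t = s,
          Real.negMulLog (∑ w ∈ Finset.univ.filter fun w => f w = t, ρ w) := by
        apply Finset.sum_le_sum
        intro s _
        rw [key s]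
        exact negMulLog_sum_le _ _ fun t _ => Finset.sum_nonneg fun w _ => hρ0 w
    _ = ∑ t, Real.negMulLog (∑ w ∈ Finset.univ.filter fun w => f w = t, ρ w) := by
        exact Finset.sum_fiberwise _ _ _

theorem duplicate_replacement_entropy_le
    {W Ω : Type*} [Fintype W] [Fintype Ω] [DecidableEq Ω] [DecidableEq W]
    (ρ : W → ℝ) (hρ0 : ∀ w, 0 ≤ ρ w) (hρ1 : ∑ w, ρ w = 1)
    (B : ℕ) (hB : 2 ≤ B) (g : Fin B → W → Ω)
    (i₀ j₀ : Fin B) (hij : i₀ ≠ j₀) (hdup : g i₀ = g j₀)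
    (g' : W → Ω) :
    pushEnt ρ (fun w => fun i => g i w) ≤
      pushEnt ρ (fun w => fun i => Function.update g j₀ g' i w) := by
  set φ : (Fin B → Ω) → (Fin B → Ω) := fun v => Function.update v j₀ (v i₀) with hφ
  have hcomp : (fun w => fun i => g i w)
      = φ ∘ (fun w => fun i => Function.update g j₀ g' i w) := by
    funext w i
    by_cases hi : i = j₀
    · subst hi
      simp [hφ, Function.update_of_ne hij, ← hdup]
    · simp [hφ, Function.update_of_ne hi]
  rw [hcomp]
  exact pushEnt_comp_le ρ hρ0 _ φ
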